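/- Let Ω ⊆ ℝ^N be a bounded open set. For each n let (y_n, D_n, f_n) be an admissible deformation triple on Ω, and let (y, D, f) be an admissible deformation triple on Ω. Assume that y_n → y almost everywhere in Ω and that the sequence x ↦ det(f_n x) converges weakly in L¹(Ω) to x ↦ det(f x). Then for every measurable set E ⊆ Ω one has volume((y_n(E ∩ D_n)) Δ (y(E ∩ D))) → 0 as n → ∞; that is, the indicator functions of the geometric images im_G(y_n, E) = y_n(E ∩ D_n) converge in L¹(ℝ^N) to the indicator function of im_G(y, E) = y(E ∩ D). -/

import Mathlib

open MeasureTheory Filter Topology Set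
open scoped ENNReal NNReal

noncomputable section

abbrev Euc (N : ℕ) := EuclideanSpace ℝ (Fin N)

/-- An a.e. approximately differentiable map on `A`, encoded as a triple `(u, D, f)`. -/
def ApproxDiffTriple {N : ℕ} (A D : Set (Euc N)) (u : Euc N → Euc N)
    (f : Euc N → Euc N →L[ℝ] Euc N) : Prop :=
  MeasurableSet D ∧ D ⊆ A ∧ volume (A \ D) = 0 ∧ ∀ x ∈ D, HasFDerivWithinAt u (f x) D x

/-- An admissible deformation on `Ω` (the class `𝒴(Ω)` of the paper). -/
def AdmissibleDef {N : ℕ} (Ω D : Set (Euc N)) (y : Euc N → Euc N)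
    (f : Euc N → Euc N →L[ℝ] Euc N) : Prop :=
  ApproxDiffTriple Ω D y f ∧ Set.InjOn y D ∧ (∀ x ∈ D, 0 < (f x).det) ∧
    IntegrableOn (fun x => (f x).det) Ω volume

/-- Weak convergence in `L¹(Ω)`, tested against bounded measurable functions. -/
def WeakL1ConvOn {N : ℕ} (Ω : Set (Euc N)) (u : ℕ → Euc N → ℝ) (v : Euc N → ℝ) : Prop :=
  ∀ g : Euc N → ℝ, Measurable g → (∃ C : ℝ, ∀ x, |g x| ≤ C) →
    Tendsto (fun n => ∫ x in Ω, u n x * g x) atTop (𝓝 (∫ x in Ω, v x * g x))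

section AuxLemmas

variable {N : ℕ}

lemma aux_ae_mem {Ω D S : Set (Euc N)} (hD : MeasurableSet D)
    (hnull : volume (Ω \ D) = 0) (hSΩ : S ⊆ Ω) :
    ∀ᵐ x ∂(volume.restrict S), x ∈ D := by
  apply ae_restrict_of_ae_restrict_of_subset hSΩ
  rw [ae_iff]
  have : {a | ¬ a ∈ D} = Dᶜ := rfl
  rw [this, Measure.restrict_apply hD.compl]
  refine measure_mono_null (fun x hx => ?_) hnull
  exact ⟨hx.2, hx.1⟩

lemma aux_set_ae_eq {Ω D S : Set (Euc N)} (hnull : volume (Ω \ D) = 0) (hSΩ : S ⊆ Ω) :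
    (S : Set (Euc N)) =ᵐ[volume] ((S ∩ D : Set (Euc N))) := by
  have h0 : volume (S \ D) = 0 :=
    measure_mono_null (show S \ D ⊆ Ω \ D from fun x hx => ⟨hSΩ hx.1, hx.2⟩) hnull
  have h1 := MeasureTheory.diff_null_ae_eq_self (s := S) (μ := (volume : Measure (Euc N))) h0
  rw [Set.diff_diff_right_self] at h1
  exact h1.symm

lemma adm_unpack {Ω D : Set (Euc N)} {u : Euc N → Euc N} {f : Euc N → Euc N →L[ℝ] Euc N}
    (h : AdmissibleDef Ω D u f) {S : Set (Euc N)} (hS : MeasurableSet S) :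
    MeasurableSet (S ∩ D) ∧ (∀ x ∈ S ∩ D, HasFDerivWithinAt u (f x) (S ∩ D) x) ∧
      Set.InjOn u (S ∩ D) := by
  obtain ⟨⟨hD, hDΩ, hnull, hderiv⟩, hinj, hpos, hint⟩ := h
  exact ⟨hS.inter hD, fun x hx => (hderiv x hx.2).mono inter_subset_right,
    hinj.mono inter_subset_right⟩

lemma adm_image_measurable {Ω D : Set (Euc N)} {u : Euc N → Euc N}
    {f : Euc N → Euc N →L[ℝ] Euc N} (h : AdmissibleDef Ω D u f) {S : Set (Euc N)}
    (hS : MeasurableSet S) : MeasurableSet (u '' (S ∩ D)) := by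
  obtain ⟨hT, hderiv', hinj'⟩ := adm_unpack h hS
  exact measurable_image_of_fderivWithin hT hderiv' hinj'

lemma adm_image_volume {Ω D : Set (Euc N)} {u : Euc N → Euc N}
    {f : Euc N → Euc N →L[ℝ] Euc N} (h : AdmissibleDef Ω D u f) {S : Set (Euc N)}
    (hS : MeasurableSet S) (hSΩ : S ⊆ Ω) :
    volume (u '' (S ∩ D)) = ENNReal.ofReal (∫ x in S, (f x).det) := by
  obtain ⟨hT, hderiv', hinj'⟩ := adm_unpack h hS
  obtain ⟨⟨hD, hDΩ, hnull, hderiv⟩, hinj, hpos, hint⟩ := h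
  have hae : ∀ᵐ x ∂(volume.restrict S), x ∈ D := aux_ae_mem hD hnull hSΩ
  have heq := aux_set_ae_eq (S := S) hnull hSΩ
  rw [← lintegral_abs_det_fderiv_eq_addHaar_image volume hT hderiv' hinj']
  rw [← setLIntegral_congr heq]
  rw [ofReal_integral_eq_lintegral_ofReal (hint.mono_set hSΩ)
    (hae.mono fun x hx => (hpos x hx).le)]
  apply lintegral_congr_ae
  exact hae.mono fun x hx => by
    show ENNReal.ofReal |(f x).det| = ENNReal.ofReal (f x).det
    rw [abs_of_pos (hpos x hx)]

lemma adm_image_integral {Ω D : Set (Euc N)} {u : Euc N → Euc N}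
    {f : Euc N → Euc N →L[ℝ] Euc N} (h : AdmissibleDef Ω D u f) {S : Set (Euc N)}
    (hS : MeasurableSet S) (hSΩ : S ⊆ Ω) (g : Euc N → ℝ) :
    ∫ z in u '' (S ∩ D), g z = ∫ x in S, g (u x) * (f x).det := by
  obtain ⟨hT, hderiv', hinj'⟩ := adm_unpack h hS
  obtain ⟨⟨hD, hDΩ, hnull, hderiv⟩, hinj, hpos, hint⟩ := h
  have hae : ∀ᵐ x ∂(volume.restrict S), x ∈ D := aux_ae_mem hD hnull hSΩ
  have heq := aux_set_ae_eq (S := S) hnull hSΩ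
  rw [integral_image_eq_integral_abs_det_fderiv_smul volume hT hderiv' hinj' g]
  rw [← setIntegral_congr_set heq]
  apply integral_congr_ae
  exact hae.mono fun x hx => by
    show |(f x).det| • g (u x) = g (u x) * (f x).det
    rw [smul_eq_mul, abs_of_pos (hpos x hx), mul_comm]

lemma adm_aemeasurable {Ω D : Set (Euc N)} {u : Euc N → Euc N}
    {f : Euc N → Euc N →L[ℝ] Euc N} (h : AdmissibleDef Ω D u f) :
    AEMeasurable u (volume.restrict Ω) := by
  obtain ⟨⟨hD, hDΩ, hnull, hderiv⟩, hinj, hpos, hint⟩ := h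
  have hcont : ContinuousOn u D := fun x hx => (hderiv x hx).continuousWithinAt
  have hΩD : (Ω : Set (Euc N)) =ᵐ[volume] (D : Set (Euc N)) := by
    have := aux_set_ae_eq (S := Ω) hnull subset_rfl
    rwa [inter_eq_self_of_subset_right hDΩ] at this
  rw [Measure.restrict_congr_set hΩD]
  exact hcont.aemeasurable hD

lemma bounded_mul_integrableOn {S : Set (Euc N)} {c : Euc N → ℝ}
    (hc : IntegrableOn c S volume) (hcnn : 0 ≤ᵐ[volume.restrict S] c) {h : Euc N → ℝ}
    (hh : AEStronglyMeasurable h (volume.restrict S)) {M : ℝ}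
    (hM : ∀ᵐ x ∂(volume.restrict S), |h x| ≤ M) :
    IntegrableOn (fun x => h x * c x) S volume := by
  apply Integrable.mono' (hc.const_mul M) (hh.mul hc.aestronglyMeasurable)
  filter_upwards [hcnn, hM] with x h1 h2
  show ‖h x * c x‖ ≤ M * c x
  rw [norm_mul]
  calc ‖h x‖ * ‖c x‖ ≤ M * ‖c x‖ := by
        apply mul_le_mul_of_nonneg_right _ (norm_nonneg _)
        rwa [Real.norm_eq_abs]
    _ = M * c x := by rw [Real.norm_eq_abs, abs_of_nonneg h1]

lemma test_tendsto {Ω : Set (Euc N)} (hΩm : MeasurableSet Ω)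
    {c : ℕ → Euc N → ℝ} {c₀ : Euc N → ℝ} (hdet : WeakL1ConvOn Ω c c₀)
    {S : Set (Euc N)} (hS : MeasurableSet S) (hSΩ : S ⊆ Ω) :
    Tendsto (fun n => ∫ x in S, c n x) atTop (𝓝 (∫ x in S, c₀ x)) := by
  have hb : ∀ x, |S.indicator (fun _ => (1:ℝ)) x| ≤ 1 := fun x => by
    by_cases hx : x ∈ S <;> simp [hx]
  have h := hdet (S.indicator fun _ => 1) (measurable_const.indicator hS) ⟨1, hb⟩
  have he : ∀ c' : Euc N → ℝ,
      (∫ x in Ω, c' x * S.indicator (fun _ => (1:ℝ)) x) = ∫ x in S, c' x := by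
    intro c'
    have hh : (fun x => c' x * S.indicator (fun _ => (1:ℝ)) x) = S.indicator c' := by
      funext x; by_cases hx : x ∈ S <;> simp [hx]
    rw [hh, setIntegral_indicator hS, inter_eq_self_of_subset_right hSΩ]
  simp only [he] at h
  exact h

lemma key_tendsto {Ω : Set (Euc N)} (hΩm : MeasurableSet Ω) (hμΩ : volume Ω ≠ ⊤)
    {y : ℕ → Euc N → Euc N} {D : ℕ → Set (Euc N)} {f : ℕ → Euc N → Euc N →L[ℝ] Euc N}
    (hadm : ∀ n, AdmissibleDef Ω (D n) (y n) (f n))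
    {y₀ : Euc N → Euc N} {D₀ : Set (Euc N)} {f₀ : Euc N → Euc N →L[ℝ] Euc N}
    (hadm₀ : AdmissibleDef Ω D₀ y₀ f₀)
    (hae : ∀ᵐ x ∂(volume.restrict Ω), Tendsto (fun n => y n x) atTop (𝓝 (y₀ x)))
    (hdet : WeakL1ConvOn Ω (fun n x => (f n x).det) (fun x => (f₀ x).det))
    {E : Set (Euc N)} (hE : MeasurableSet E) (hEΩ : E ⊆ Ω)
    {g : Euc N → ℝ} (hgc : Continuous g) (hgs : HasCompactSupport g) :
    Tendsto (fun n => ∫ x in E, g (y n x) * (f n x).det) atTop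
      (𝓝 (∫ x in E, g (y₀ x) * (f₀ x).det)) := by
  have hint : ∀ n, IntegrableOn (fun x => (f n x).det) Ω volume := fun n => (hadm n).2.2.2
  have hint₀ : IntegrableOn (fun x => (f₀ x).det) Ω volume := hadm₀.2.2.2
  have hcnn : ∀ n, 0 ≤ᵐ[volume.restrict Ω] fun x => (f n x).det := fun n =>
    (aux_ae_mem (hadm n).1.1 (hadm n).1.2.2.1 subset_rfl).mono
      fun x hx => ((hadm n).2.2.1 x hx).le
  have hcnn₀ : 0 ≤ᵐ[volume.restrict Ω] fun x => (f₀ x).det :=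
    (aux_ae_mem hadm₀.1.1 hadm₀.1.2.2.1 subset_rfl).mono fun x hx => (hadm₀.2.2.1 x hx).le
  have hym : ∀ n, AEMeasurable (y n) (volume.restrict Ω) := fun n => adm_aemeasurable (hadm n)
  have hy0m : AEMeasurable y₀ (volume.restrict Ω) := adm_aemeasurable hadm₀
  set Y : ℕ → Euc N → Euc N := fun n => (hym n).mk (y n) with hYdef
  set Y₀ : Euc N → Euc N := hy0m.mk y₀ with hY0def
  have hYm : ∀ n, Measurable (Y n) := fun n => (hym n).measurable_mk
  have hY0m : Measurable Y₀ := hy0m.measurable_mk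
  have hyeq : ∀ᵐ x ∂(volume.restrict Ω), (∀ n, y n x = Y n x) ∧ y₀ x = Y₀ x :=
    (ae_all_iff.2 fun n => (hym n).ae_eq_mk).and hy0m.ae_eq_mk
  obtain ⟨M₀, hM₀⟩ := hgs.exists_bound_of_continuous hgc
  set M : ℝ := max M₀ 1 with hMdef
  have hM : ∀ x, |g x| ≤ M := fun x => by
    rw [← Real.norm_eq_abs]; exact (hM₀ x).trans (le_max_left _ _)
  have hMpos : (0:ℝ) < M := lt_of_lt_of_le one_pos (le_max_right _ _)
  have hres : volume.restrict E ≤ volume.restrict Ω := Measure.restrict_mono hEΩ le_rfl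
  have hIg : ∀ (h : Euc N → Euc N), AEMeasurable h (volume.restrict Ω) → ∀ (c : Euc N → ℝ),
      IntegrableOn c Ω volume → (0 ≤ᵐ[volume.restrict Ω] c) →
      IntegrableOn (fun x => g (h x) * c x) E volume := by
    intro h hm c hc hc0
    apply bounded_mul_integrableOn (hc.mono_set hEΩ)
      (ae_restrict_of_ae_restrict_of_subset hEΩ hc0)
    · exact (hgc.measurable.comp_aemeasurable (hm.mono_measure hres)).aestronglyMeasurable
    · exact Eventually.of_forall fun x => hM (h x)
  have hI : ∀ n, IntegrableOn (fun x => g (y n x) * (f n x).det) E volume :=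
    fun n => hIg (y n) (hym n) _ (hint n) (hcnn n)
  have hI0 : ∀ n, IntegrableOn (fun x => g (y₀ x) * (f n x).det) E volume :=
    fun n => hIg y₀ hy0m _ (hint n) (hcnn n)
  -- second piece of the decomposition
  have h2 : Tendsto (fun n => ∫ x in E, g (y₀ x) * (f n x).det) atTop
      (𝓝 (∫ x in E, g (y₀ x) * (f₀ x).det)) := by
    classical
    set G : Euc N → ℝ := E.piecewise (fun x => g (Y₀ x)) (fun _ => 0) with hGdef
    have hGm : Measurable G := Measurable.piecewise hE
      ((hgc.measurable.comp hY0m : Measurable (g ∘ Y₀)) :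
        Measurable fun x => g (Y₀ x)) measurable_const
    have hGb : ∀ x, |G x| ≤ M := by
      intro x
      rw [hGdef]
      by_cases hx : x ∈ E
      · rw [Set.piecewise_eq_of_mem _ _ _ hx]; exact hM _
      · rw [Set.piecewise_eq_of_notMem _ _ _ hx]; simpa using hMpos.le
    have h := hdet G hGm ⟨M, hGb⟩
    have he : ∀ c : Euc N → ℝ, (∫ x in Ω, c x * G x) = ∫ x in E, g (y₀ x) * c x := by
      intro c
      have h1 : (fun x => c x * G x) = E.indicator (fun x => c x * g (Y₀ x)) := by
        funext x; by_cases hx : x ∈ E <;> simp [hGdef, Set.piecewise, hx]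
      rw [h1, setIntegral_indicator hE, inter_eq_self_of_subset_right hEΩ]
      apply integral_congr_ae
      filter_upwards [ae_restrict_of_ae_restrict_of_subset hEΩ hyeq] with x hx
      show c x * g (Y₀ x) = g (y₀ x) * c x
      rw [hx.2]; exact mul_comm _ _
    simp only [he] at h
    exact h
  -- first piece: tendsto zero
  have h1 : Tendsto (fun n => ∫ x in E, (g (y n x) - g (y₀ x)) * (f n x).det) atTop (𝓝 0) := by
    rw [NormedAddCommGroup.tendsto_nhds_zero]
    intro ε hε
    obtain ⟨C₀, hC₀⟩ := (test_tendsto hΩm hdet hΩm subset_rfl).bddAbove_range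
    set C : ℝ := max C₀ 1 with hCdef
    have hCpos : (0:ℝ) < C := lt_of_lt_of_le one_pos (le_max_right _ _)
    have hCb : ∀ n, (∫ x in Ω, (f n x).det) ≤ C := fun n =>
      le_trans (hC₀ ⟨n, rfl⟩) (le_max_left _ _)
    set ε₂ : ℝ := ε / (4 * C) with hε₂def
    have hε₂ : 0 < ε₂ := by positivity
    set ε₁ : ℝ := ε / (8 * M) with hε₁def
    have hε₁ : 0 < ε₁ := by positivity
    have hlt : (∫⁻ x, ENNReal.ofReal ((f₀ x).det) ∂(volume.restrict Ω)) ≠ ⊤ :=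
      hint₀.lintegral_lt_top.ne
    obtain ⟨δ, hδpos, hδ⟩ := exists_pos_setLIntegral_lt_of_measure_lt hlt
      (ENNReal.ofReal_pos.2 hε₁).ne'
    obtain ⟨d, hd0, hdδ⟩ := exists_between hδpos
    have hdtop : d ≠ ⊤ := (lt_of_lt_of_le hdδ le_top).ne
    have hdr : 0 < d.toReal := ENNReal.toReal_pos hd0.ne' hdtop
    have hfg : ∀ᵐ x ∂(volume : Measure (Euc N)), x ∈ Ω →
        Tendsto (fun n => Y n x) atTop (𝓝 (Y₀ x)) := by
      rw [← ae_restrict_iff' hΩm]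
      filter_upwards [hae, hyeq] with x hx1 hx2
      have hfe : (fun n => Y n x) = fun n => y n x := funext fun n => (hx2.1 n).symm
      rw [hfe, ← hx2.2]; exact hx1
    obtain ⟨t, htΩ, htm, htvol, hunif⟩ := tendstoUniformlyOn_of_ae_tendsto
      (fun n => (hYm n).stronglyMeasurable) hY0m.stronglyMeasurable hΩm hμΩ hfg hdr
    have htδ : (volume.restrict Ω) t < δ := by
      rw [Measure.restrict_apply htm]
      calc volume (t ∩ Ω) ≤ volume t := measure_mono inter_subset_left
        _ ≤ ENNReal.ofReal d.toReal := htvol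
        _ = d := by rw [ENNReal.ofReal_toReal hdtop]
        _ < δ := hdδ
    have ht0 : (∫ x in t, (f₀ x).det) < ε₁ := by
      have h' := hδ t htδ
      rw [Measure.restrict_restrict htm, inter_eq_self_of_subset_left htΩ] at h'
      have heq2 : (∫ x in t, (f₀ x).det) =
          (∫⁻ x in t, ENNReal.ofReal ((f₀ x).det) ∂volume).toReal := by
        rw [integral_eq_lintegral_of_nonneg_ae
          (ae_restrict_of_ae_restrict_of_subset htΩ hcnn₀)
          ((hint₀.mono_set htΩ).aestronglyMeasurable)]
      rw [heq2]
      exact ENNReal.toReal_lt_of_lt_ofReal h'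
    have htn : ∀ᶠ n in atTop, (∫ x in t, (f n x).det) < ε₁ :=
      (test_tendsto hΩm hdet htm htΩ).eventually_lt_const ht0
    have hgu : UniformContinuous g := hgs.uniformContinuous_of_continuous hgc
    obtain ⟨η, hη, hηg⟩ := Metric.uniformContinuous_iff.1 hgu ε₂ hε₂
    have hunif' : ∀ᶠ n in atTop, ∀ x ∈ Ω \ t, dist (Y₀ x) (Y n x) < η :=
      Metric.tendstoUniformlyOn_iff.1 hunif η hη
    filter_upwards [htn, hunif'] with n htn' hun'
    have hInt : IntegrableOn (fun x => (g (y n x) - g (y₀ x)) * (f n x).det) E volume := by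
      have := (hI n).sub (hI0 n); simpa [sub_mul, Pi.sub_def] using this
    have hnormInt : IntegrableOn (fun x => ‖(g (y n x) - g (y₀ x)) * (f n x).det‖) E volume :=
      hInt.norm
    have step1 : ‖∫ x in E, (g (y n x) - g (y₀ x)) * (f n x).det‖
        ≤ ∫ x in E, ‖(g (y n x) - g (y₀ x)) * (f n x).det‖ := norm_integral_le_integral_norm _
    have hsplitE : (E \ t) ∪ (E ∩ t) = E := Set.diff_union_inter E t
    have hdisj : Disjoint (E \ t) (E ∩ t) := Set.disjoint_sdiff_inter
    have step2 : (∫ x in E, ‖(g (y n x) - g (y₀ x)) * (f n x).det‖)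
        = (∫ x in E \ t, ‖(g (y n x) - g (y₀ x)) * (f n x).det‖)
          + ∫ x in E ∩ t, ‖(g (y n x) - g (y₀ x)) * (f n x).det‖ := by
      rw [← MeasureTheory.setIntegral_union hdisj (hE.inter htm)
        (hnormInt.mono_set diff_subset) (hnormInt.mono_set inter_subset_left), hsplitE]
    have hb1 : (∫ x in E \ t, ‖(g (y n x) - g (y₀ x)) * (f n x).det‖) ≤ ε₂ * C := by
      have hEt : E \ t ⊆ Ω := fun x hx => hEΩ hx.1
      have hbound : ∀ᵐ x ∂(volume.restrict (E \ t)),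
          ‖(g (y n x) - g (y₀ x)) * (f n x).det‖ ≤ ε₂ * (f n x).det := by
        filter_upwards [ae_restrict_of_ae_restrict_of_subset hEt hyeq,
          ae_restrict_of_ae_restrict_of_subset hEt (hcnn n),
          ae_restrict_mem (hE.diff htm)] with x hx1 hx2 hx3
        have hx2' : (0:ℝ) ≤ (f n x).det := hx2
        rw [norm_mul, Real.norm_eq_abs, Real.norm_eq_abs, abs_of_nonneg hx2']
        apply mul_le_mul_of_nonneg_right _ hx2'
        have hdd : dist (Y₀ x) (Y n x) < η := hun' x ⟨hEΩ hx3.1, hx3.2⟩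
        have hgd : dist (g (Y n x)) (g (Y₀ x)) < ε₂ := hηg (by rwa [dist_comm])
        rw [hx1.1 n, hx1.2]
        calc |g (Y n x) - g (Y₀ x)| = dist (g (Y n x)) (g (Y₀ x)) := (Real.dist_eq _ _).symm
          _ ≤ ε₂ := hgd.le
      calc (∫ x in E \ t, ‖(g (y n x) - g (y₀ x)) * (f n x).det‖)
          ≤ ∫ x in E \ t, ε₂ * (f n x).det :=
            integral_mono_ae (hnormInt.mono_set diff_subset)
              (((hint n).mono_set hEt).const_mul ε₂) hbound
        _ = ε₂ * ∫ x in E \ t, (f n x).det := integral_const_mul _ _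
        _ ≤ ε₂ * ∫ x in Ω, (f n x).det := by
            apply mul_le_mul_of_nonneg_left _ hε₂.le
            exact setIntegral_mono_set (hint n) (hcnn n)
              (HasSubset.Subset.eventuallyLE hEt)
        _ ≤ ε₂ * C := mul_le_mul_of_nonneg_left (hCb n) hε₂.le
    have hb2 : (∫ x in E ∩ t, ‖(g (y n x) - g (y₀ x)) * (f n x).det‖) ≤ 2 * M * ε₁ := by
      have hEt : E ∩ t ⊆ Ω := fun x hx => hEΩ hx.1
      have hbound : ∀ᵐ x ∂(volume.restrict (E ∩ t)),
          ‖(g (y n x) - g (y₀ x)) * (f n x).det‖ ≤ (2 * M) * (f n x).det := by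
        filter_upwards [ae_restrict_of_ae_restrict_of_subset hEt (hcnn n)] with x hx2
        have hx2' : (0:ℝ) ≤ (f n x).det := hx2
        rw [norm_mul, Real.norm_eq_abs, Real.norm_eq_abs, abs_of_nonneg hx2']
        apply mul_le_mul_of_nonneg_right _ hx2'
        calc |g (y n x) - g (y₀ x)| ≤ |g (y n x)| + |g (y₀ x)| := by
              simpa [sub_eq_add_neg, abs_neg] using abs_add_le (g (y n x)) (-(g (y₀ x)))
          _ ≤ M + M := add_le_add (hM _) (hM _)
          _ = 2 * M := by ring
      calc (∫ x in E ∩ t, ‖(g (y n x) - g (y₀ x)) * (f n x).det‖)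
          ≤ ∫ x in E ∩ t, (2 * M) * (f n x).det :=
            integral_mono_ae (hnormInt.mono_set inter_subset_left)
              (((hint n).mono_set hEt).const_mul _) hbound
        _ = (2 * M) * ∫ x in E ∩ t, (f n x).det := integral_const_mul _ _
        _ ≤ (2 * M) * ∫ x in t, (f n x).det := by
            apply mul_le_mul_of_nonneg_left _ (by positivity)
            exact setIntegral_mono_set ((hint n).mono_set htΩ)
              (ae_restrict_of_ae_restrict_of_subset htΩ (hcnn n))
              (HasSubset.Subset.eventuallyLE inter_subset_right)
        _ ≤ 2 * M * ε₁ := mul_le_mul_of_nonneg_left htn'.le (by positivity)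
    have htotal : ‖∫ x in E, (g (y n x) - g (y₀ x)) * (f n x).det‖ ≤ ε₂ * C + 2 * M * ε₁ :=
      step1.trans (step2 ▸ add_le_add hb1 hb2)
    refine lt_of_le_of_lt htotal ?_
    have he1 : ε₂ * C = ε / 4 := by
      rw [hε₂def]; field_simp
    have he2 : 2 * M * ε₁ = ε / 4 := by
      rw [hε₁def]; field_simp; ring
    rw [he1, he2]; linarith
  have hisum : ∀ n, (∫ x in E, g (y n x) * (f n x).det)
      = (∫ x in E, (g (y n x) - g (y₀ x)) * (f n x).det)
        + ∫ x in E, g (y₀ x) * (f n x).det := by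
    intro n
    have hInt : IntegrableOn (fun x => (g (y n x) - g (y₀ x)) * (f n x).det) E volume := by
      have := (hI n).sub (hI0 n); simpa [sub_mul, Pi.sub_def] using this
    rw [← integral_add hInt (hI0 n)]
    apply integral_congr_ae
    apply Eventually.of_forall
    intro x
    show g (y n x) * (f n x).det = (g (y n x) - g (y₀ x)) * (f n x).det + g (y₀ x) * (f n x).det
    ring
  have hcomb := h1.add h2
  rw [zero_add] at hcomb
  have hfe : (fun n => ∫ x in E, g (y n x) * (f n x).det)
      = fun n => (∫ x in E, (g (y n x) - g (y₀ x)) * (f n x).det)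
        + ∫ x in E, g (y₀ x) * (f n x).det := funext hisum
  rw [hfe]
  exact hcomb

end AuxLemmas

/-- Convergence of geometric images: `χ_{im_G(y_n,E)} → χ_{im_G(y,E)}` in `L¹(ℝ^N)`. -/
theorem convergence_of_geometric_images {N : ℕ} (hN : 2 ≤ N)
    (Ω : Set (Euc N)) (hΩo : IsOpen Ω) (hΩb : Bornology.IsBounded Ω)
    (y : ℕ → Euc N → Euc N) (D : ℕ → Set (Euc N)) (f : ℕ → Euc N → Euc N →L[ℝ] Euc N)
    (hadm : ∀ n, AdmissibleDef Ω (D n) (y n) (f n))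
    (y₀ : Euc N → Euc N) (D₀ : Set (Euc N)) (f₀ : Euc N → Euc N →L[ℝ] Euc N)
    (hadm₀ : AdmissibleDef Ω D₀ y₀ f₀)
    (hae : ∀ᵐ x ∂(volume.restrict Ω), Tendsto (fun n => y n x) atTop (𝓝 (y₀ x)))
    (hdet : WeakL1ConvOn Ω (fun n x => (f n x).det) (fun x => (f₀ x).det))
    (E : Set (Euc N)) (hE : MeasurableSet E) (hEΩ : E ⊆ Ω) :
    Tendsto
      (fun n =>
        volume ((y n '' (E ∩ D n) \ y₀ '' (E ∩ D₀)) ∪ (y₀ '' (E ∩ D₀) \ y n '' (E ∩ D n))))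
      atTop (𝓝 0) := by
  have hΩm : MeasurableSet Ω := hΩo.measurableSet
  have hμΩ : volume Ω ≠ ⊤ := hΩb.measure_lt_top.ne
  set A : ℕ → Set (Euc N) := fun n => y n '' (E ∩ D n) with hAdef
  set A₀ : Set (Euc N) := y₀ '' (E ∩ D₀) with hA₀def
  have hAmeas : ∀ n, MeasurableSet (A n) := fun n => adm_image_measurable (hadm n) hE
  have hA₀meas : MeasurableSet A₀ := adm_image_measurable hadm₀ hE
  have harea : ∀ n, volume (A n) = ENNReal.ofReal (∫ x in E, (f n x).det) :=
    fun n => adm_image_volume (hadm n) hE hEΩ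
  have harea₀ : volume A₀ = ENNReal.ofReal (∫ x in E, (f₀ x).det) :=
    adm_image_volume hadm₀ hE hEΩ
  have hA₀top : volume A₀ ≠ ⊤ := by rw [harea₀]; exact ENNReal.ofReal_ne_top
  have hAtop : ∀ n, volume (A n) ≠ ⊤ := fun n => by rw [harea n]; exact ENNReal.ofReal_ne_top
  have hdetE : Tendsto (fun n => ∫ x in E, (f n x).det) atTop (𝓝 (∫ x in E, (f₀ x).det)) :=
    test_tendsto hΩm hdet hE hEΩ
  have hvol : Tendsto (fun n => volume (A n)) atTop (𝓝 (volume A₀)) := by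
    simp only [harea, harea₀]
    exact (ENNReal.continuous_ofReal.tendsto _).comp hdetE
  set a : ℝ := (volume A₀).toReal with hadef2
  have hvolR : Tendsto (fun n => (volume (A n)).toReal) atTop (𝓝 a) :=
    (ENNReal.tendsto_toReal hA₀top).comp hvol
  set χ : Euc N → ℝ := A₀.indicator (fun _ => 1) with hχdef
  have hχint : Integrable χ volume := by
    rw [hχdef, integrable_indicator_iff hA₀meas]
    exact integrableOn_const hA₀top
  have hbeq : ∀ (S : Set (Euc N)), MeasurableSet S →
      (∫ x in S, χ x) = (volume (A₀ ∩ S)).toReal := by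
    intro S hS
    rw [hχdef, setIntegral_indicator hA₀meas, setIntegral_const, smul_eq_mul, mul_one,
      inter_comm]; rfl
  have hbconv : Tendsto (fun n => (volume (A n ∩ A₀)).toReal) atTop (𝓝 a) := by
    rw [Metric.tendsto_nhds]
    intro ε hε
    have hup : ∀ᶠ n in atTop, (volume (A n)).toReal < a + ε/2 :=
      hvolR.eventually_lt_const (by linarith)
    obtain ⟨g, hgsupp, hgL1, hgc, hgint⟩ :=
      hχint.exists_hasCompactSupport_integral_sub_le (show (0:ℝ) < ε/8 by positivity)
    have hkey := key_tendsto hΩm hμΩ hadm hadm₀ hae hdet hE hEΩ hgc hgsupp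
    have him : ∀ n, (∫ z in A n, g z) = ∫ x in E, g (y n x) * (f n x).det :=
      fun n => adm_image_integral (hadm n) hE hEΩ g
    have him₀ : (∫ z in A₀, g z) = ∫ x in E, g (y₀ x) * (f₀ x).det :=
      adm_image_integral hadm₀ hE hEΩ g
    have hdiff : ∀ (S : Set (Euc N)), MeasurableSet S →
        |(∫ x in S, χ x) - ∫ x in S, g x| ≤ ε/8 := by
      intro S hS
      rw [← integral_sub (hχint.integrableOn) (hgint.integrableOn)]
      calc |∫ x in S, (χ x - g x)| ≤ ∫ x in S, ‖χ x - g x‖ := by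
            rw [← Real.norm_eq_abs]; exact norm_integral_le_integral_norm _
        _ ≤ ∫ x, ‖χ x - g x‖ :=
            setIntegral_le_integral (hχint.sub hgint).norm
              (Eventually.of_forall fun x => norm_nonneg _)
        _ ≤ ε/8 := hgL1
    have hlow : ∀ᶠ n in atTop, a - ε < (volume (A n ∩ A₀)).toReal := by
      have hev : ∀ᶠ n in atTop,
          (∫ x in E, g (y₀ x) * (f₀ x).det) - ε/8 < ∫ x in E, g (y n x) * (f n x).det :=
        hkey.eventually_const_lt (by linarith)
      filter_upwards [hev] with n hn
      have e1 : (volume (A n ∩ A₀)).toReal = ∫ x in A n, χ x := by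
        rw [hbeq (A n) (hAmeas n), inter_comm]
      have e2 : (∫ x in A n, g x) - ε/8 ≤ ∫ x in A n, χ x := by
        have h' := (abs_le.1 (hdiff (A n) (hAmeas n))).1; linarith
      have e3 : (∫ x in A₀, χ x) = a := by rw [hbeq A₀ hA₀meas, inter_self]
      have e4 : a - ε/8 ≤ ∫ x in A₀, g x := by
        have h' := (abs_le.1 (hdiff A₀ hA₀meas)).2; linarith
      have e5 : (∫ x in A₀, g x) - ε/8 < ∫ x in A n, g x := by
        rw [him n, him₀]; exact hn
      rw [e1]; linarith
    filter_upwards [hup, hlow] with n h1 h2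
    rw [Real.dist_eq, abs_lt]
    have hle : (volume (A n ∩ A₀)).toReal ≤ (volume (A n)).toReal :=
      ENNReal.toReal_mono (hAtop n) (measure_mono inter_subset_left)
    constructor
    · linarith
    · linarith
  have hbE : Tendsto (fun n => volume (A n ∩ A₀)) atTop (𝓝 (volume A₀)) := by
    have h1 := (ENNReal.continuous_ofReal.tendsto a).comp hbconv
    have h2 : ∀ n, ENNReal.ofReal ((volume (A n ∩ A₀)).toReal) = volume (A n ∩ A₀) := fun n =>
      ENNReal.ofReal_toReal
        (lt_of_le_of_lt (measure_mono inter_subset_right) hA₀top.lt_top).ne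
    have h3 : ENNReal.ofReal a = volume A₀ := ENNReal.ofReal_toReal hA₀top
    rw [show (ENNReal.ofReal ∘ fun n => (volume (A n ∩ A₀)).toReal)
        = fun n => ENNReal.ofReal ((volume (A n ∩ A₀)).toReal) from rfl] at h1
    simp only [h2, h3] at h1
    exact h1
  have hfin : ∀ n, volume (A n ∩ A₀) ≠ ⊤ := fun n =>
    (lt_of_le_of_lt (measure_mono inter_subset_right) hA₀top.lt_top).ne
  have hd1 : Tendsto (fun n => volume (A n \ A₀)) atTop (𝓝 0) := by
    have heq : ∀ n, volume (A n \ A₀) = volume (A n) - volume (A n ∩ A₀) := by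
      intro n
      rw [← Set.diff_self_inter (s := A n) (t := A₀)]
      exact measure_diff inter_subset_left ((hAmeas n).inter hA₀meas).nullMeasurableSet
        (hfin n)
    have h := ENNReal.Tendsto.sub hvol hbE (Or.inl hA₀top)
    rw [tsub_self] at h
    simp only [heq]
    exact h
  have hd2 : Tendsto (fun n => volume (A₀ \ A n)) atTop (𝓝 0) := by
    have heq : ∀ n, volume (A₀ \ A n) = volume A₀ - volume (A n ∩ A₀) := by
      intro n
      rw [show A₀ \ A n = A₀ \ (A₀ ∩ A n) from (Set.diff_self_inter).symm]
      rw [show A₀ ∩ A n = A n ∩ A₀ from inter_comm _ _]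
      exact measure_diff (inter_subset_right) ((hAmeas n).inter hA₀meas).nullMeasurableSet
        (hfin n)
    have h := ENNReal.Tendsto.sub (tendsto_const_nhds (x := volume A₀)) hbE (Or.inl hA₀top)
    rw [tsub_self] at h
    simp only [heq]
    exact h
  have hsum := hd1.add hd2
  rw [add_zero] at hsum
  refine tendsto_of_tendsto_of_tendsto_of_le_of_le tendsto_const_nhds hsum ?_ ?_
  · exact fun n => zero_le
  · exact fun n => measure_union_le _ _
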